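/- Let k be a perfect field, n ≥ 1, and let U be an invertible n×n matrix over k. Then U can be written in a unique way as U = D·V where D is an invertible n×n matrix over k that is absolutely semisimple, V is a unipotent n×n matrix over k, and D·V = V·D. -/

import Mathlib

open Polynomial

/-- A matrix (element of the matrix algebra over `k`) is absolutely semisimple if it
has a separable annihilating polynomial. -/
def AbsSemisimple (k : Type*) [Field k] {A : Type*} [Ring A] [Algebra k A] (u : A) : Prop :=
  ∃ f : k[X], f.Separable ∧ aeval u f = 0

theorem multiplicative_jordan_chevalley
    {k : Type*} [Field k] [PerfectField k] (n : ℕ) (hn : 1 ≤ n)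
    (U : Matrix (Fin n) (Fin n) k) (hU : IsUnit U) :
    ∃ D V : Matrix (Fin n) (Fin n) k,
      IsUnit D ∧ AbsSemisimple k D ∧ IsNilpotent (1 - V) ∧
      D * V = V * D ∧ U = D * V ∧
      ∀ D' V' : Matrix (Fin n) (Fin n) k,
        (IsUnit D' ∧ AbsSemisimple k D' ∧ IsNilpotent (1 - V') ∧
          D' * V' = V' * D' ∧ U = D' * V') → D' = D ∧ V' = V := by
  classical
  -- move to the endomorphism algebra
  let e : Matrix (Fin n) (Fin n) k ≃ₐ[k] Module.End k (Fin n → k) := Matrix.toLinAlgEquiv'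
  set f : Module.End k (Fin n → k) := e U with hf
  obtain ⟨N, hNmem, S, hSmem, hNnil, hSss, hfNS⟩ :=
    Module.End.exists_isNilpotent_isSemisimple (f := f)
  -- `S` and `N` commute with `f` and each other
  have hSf : Commute f S := Algebra.commute_of_mem_adjoin_self hSmem
  have hNf : Commute f N := Algebra.commute_of_mem_adjoin_self hNmem
  have hNS : Commute N S :=
    Algebra.commute_of_mem_adjoin_singleton_of_commute hSmem hNf.symm
  -- pull back to matrices
  set D : Matrix (Fin n) (Fin n) k := e.symm S with hD
  set Nm : Matrix (Fin n) (Fin n) k := e.symm N with hNm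
  have hUD : U = Nm + D := by
    rw [hNm, hD, ← map_add, ← hfNS, hf, AlgEquiv.symm_apply_apply]
  have hNmnil : IsNilpotent Nm := hNnil.map e.symm.toAlgHom
  have hNmD : Commute Nm D := by
    simpa [hNm, hD, Commute, SemiconjBy, ← map_mul] using congrArg e.symm hNS
  -- `D` is a unit
  have hDunit : IsUnit D := by
    have hNU : Commute Nm U := by
      rw [hUD]; exact (Commute.refl Nm).add_right hNmD
    have : IsUnit (U + -Nm) :=
      IsNilpotent.isUnit_add_left_of_commute hNmnil.neg hU hNU.neg_left
    have hDeq : D = U + -Nm := by rw [hUD]; abel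
    rwa [← hDeq] at this
  obtain ⟨u, hu⟩ := hDunit
  -- define V
  set V : Matrix (Fin n) (Fin n) k := (↑u⁻¹ : Matrix (Fin n) (Fin n) k) * U with hV
  have hNmU : Commute Nm U := by rw [hUD]; exact (Commute.refl Nm).add_right hNmD
  have hDU : Commute D U := by rw [hUD]; exact hNmD.symm.add_right (Commute.refl D)
  have huU : Commute (u : Matrix (Fin n) (Fin n) k) U := by rwa [hu]
  have huinvU : Commute (↑u⁻¹ : Matrix (Fin n) (Fin n) k) U := huU.units_inv_left
  have huinvNm : Commute (↑u⁻¹ : Matrix (Fin n) (Fin n) k) Nm := by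
    have : Commute (u : Matrix (Fin n) (Fin n) k) Nm := by rw [hu]; exact hNmD.symm
    exact this.units_inv_left
  have hDV : D * V = U := by
    rw [hV, ← hu]; exact u.mul_inv_cancel_left U
  have hVD : V * D = U := by
    rw [hV, ← hu, mul_assoc, ← huU.eq, ← mul_assoc, Units.inv_mul, one_mul]
  have h1V : (1 : Matrix (Fin n) (Fin n) k) - V
      = (↑u⁻¹ : Matrix (Fin n) (Fin n) k) * (-Nm) := by
    have hDU' : D - U = -Nm := by rw [hUD]; abel
    rw [hV, ← hDU', mul_sub, ← hu, Units.inv_mul]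
  have hVnil : IsNilpotent (1 - V) := by
    rw [h1V]
    exact Commute.isNilpotent_mul_left huinvNm.neg_right hNmnil.neg
  refine ⟨D, V, ⟨u, hu⟩, ?_, hVnil, by rw [hDV, hVD], hDV.symm, ?_⟩
  · -- absolute semisimplicity of D
    refine ⟨minpoly k S, ?_, ?_⟩
    · exact PerfectField.separable_iff_squarefree.mpr hSss.minpoly_squarefree
    · rw [hD, aeval_algHom_apply e.symm S (minpoly k S)]
      simp [minpoly.aeval]
  · -- uniqueness
    rintro D' V' ⟨hD'unit, ⟨p, hpsep, hpD'⟩, hV'nil, hcomm', hU'⟩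
    -- transfer to endomorphisms
    set s' : Module.End k (Fin n → k) := e D' with hs'
    set n' : Module.End k (Fin n → k) := e (U - D') with hn'
    have hfsn : f = n' + s' := by
      rw [hn', hs', hf, ← map_add, sub_add_cancel]
    have hD'U : Commute D' U := by
      have : D' * U = U * D' := by
        rw [hU', mul_assoc D' V' D', ← hcomm']
      exact this
    have hs'f : Commute f s' := by
      simpa [hf, hs', Commute, SemiconjBy, ← map_mul] using congrArg e hD'U.symm
    have hn'f : Commute f n' := by
      have h2 : Commute (U - D') U := (Commute.refl U).sub_left hD'U
      have h3 := congrArg e h2.symm.eq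
      rw [map_mul, map_mul] at h3
      exact h3
    -- n' is nilpotent
    have hn'nil : IsNilpotent n' := by
      have h1 : U - D' = D' * -(1 - V') := by
        rw [mul_neg, mul_sub, mul_one, hU', neg_sub]
      have hD'V' : Commute D' (1 - V') := (Commute.one_right D').sub_right hcomm'
      have : IsNilpotent (U - D') := by
        rw [h1]
        exact Commute.isNilpotent_mul_left hD'V'.neg_right hV'nil.neg
      exact this.map e.toAlgHom
    -- s' is semisimple
    have hs'ss : s'.IsSemisimple := by
      refine Module.End.isSemisimple_of_squarefree_aeval_eq_zero hpsep.squarefree ?_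
      rw [hs', aeval_algHom_apply e D' p]
      simp [hpD']
    -- s' = S
    have hs'S : Commute s' S :=
      Algebra.commute_of_mem_adjoin_singleton_of_commute hSmem hs'f.symm
    have hs'N : Commute s' N :=
      Algebra.commute_of_mem_adjoin_singleton_of_commute hNmem hs'f.symm
    have hn'N : Commute n' N :=
      Algebra.commute_of_mem_adjoin_singleton_of_commute hNmem hn'f.symm
    have hkey : s' - S = N - n' := by
      have h := hfNS.symm.trans hfsn
      exact sub_eq_sub_iff_add_eq_add.mpr (by rw [h, add_comm])
    have hsubnil : IsNilpotent (s' - S) := by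
      rw [hkey]
      exact Commute.isNilpotent_sub hn'N.symm hNnil hn'nil
    have hsubss : (s' - S).IsSemisimple :=
      Module.End.IsSemisimple.sub_of_commute hs'S hs'ss hSss
    have hs'eq : s' = S :=
      sub_eq_zero.mp (Module.End.eq_zero_of_isNilpotent_isSemisimple hsubnil hsubss)
    have hD'D : D' = D := by
      rw [hD, ← hs'eq, hs', AlgEquiv.symm_apply_apply]
    refine ⟨hD'D, ?_⟩
    rw [hV, hU', hD'D, ← hu, Units.inv_mul_cancel_left]
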